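/- Fix 1/4 < s ≤ 1/2 and let n₁,n₂,n₃,n₄ be integers with n₄ = n₁ - n₂ + n₃. Set Ψ_s(n̄) = ⟨n₁⟩^{2s} - ⟨n₂⟩^{2s} + ⟨n₃⟩^{2s} - ⟨n₄⟩^{2s}. Then there is a constant C = C(s) such that |Ψ_s(n̄)| ≤ C ⟨n₁-n₂⟩ / min( max(⟨n₁⟩^{1-2s}, ⟨n₂⟩^{1-2s}), max(⟨n₃⟩^{1-2s}, ⟨n₄⟩^{1-2s}) ). -/
import Mathlib

/-- The Japanese bracket `⟨x⟩ = (1+x²)^{1/2}`. -/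
noncomputable def jb (x : ℝ) : ℝ := Real.sqrt (1 + x ^ 2)

/-- `Ψ_s(n₁,n₂,n₃,n₄) = ⟨n₁⟩^{2s} - ⟨n₂⟩^{2s} + ⟨n₃⟩^{2s} - ⟨n₄⟩^{2s}`. -/
noncomputable def Psi (s : ℝ) (n₁ n₂ n₃ n₄ : ℤ) : ℝ :=
  jb n₁ ^ (2 * s) - jb n₂ ^ (2 * s) + jb n₃ ^ (2 * s) - jb n₄ ^ (2 * s)

lemma jb_one_le (x : ℝ) : 1 ≤ jb x := by
  rw [jb, Real.one_le_sqrt]; nlinarith [sq_nonneg x]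

lemma jb_pos (x : ℝ) : 0 < jb x := lt_of_lt_of_le one_pos (jb_one_le x)

lemma abs_le_jb (x : ℝ) : |x| ≤ jb x := by
  rw [jb, ← Real.sqrt_sq_eq_abs]
  exact Real.sqrt_le_sqrt (by nlinarith)

lemma jb_abs (x : ℝ) : jb |x| = jb x := by rw [jb, jb, sq_abs]

/-- `jb` is 1-Lipschitz on nonnegatives. -/
lemma jb_lipschitz {a b : ℝ} (hb : 0 ≤ b) (hab : b ≤ a) : jb a - jb b ≤ a - b := by
  have h1 : b ≤ jb b := by
    have := abs_le_jb b; rwa [abs_of_nonneg hb] at this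
  have h2 : 0 ≤ jb b := Real.sqrt_nonneg _
  have : jb a ≤ jb b + (a - b) := by
    rw [jb, Real.sqrt_le_left (by linarith)]
    have : (jb b) ^ 2 = 1 + b ^ 2 := Real.sq_sqrt (by positivity)
    nlinarith
  linarith

/-- Key elementary inequality: for `1 ≤ v ≤ u` and `0 < α ≤ 1`,
`u^α - v^α ≤ 2 (u - v) u^(α-1)`. -/
lemma pow_diff_le {u v α : ℝ} (hv : 1 ≤ v) (hvu : v ≤ u) (hα0 : 0 < α) (hα1 : α ≤ 1) :
    u ^ α - v ^ α ≤ 2 * (u - v) * u ^ (α - 1) := by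
  have hu : 1 ≤ u := le_trans hv hvu
  have hu0 : (0:ℝ) < u := by linarith
  have hv0 : (0:ℝ) < v := by linarith
  have huα : u ^ α = u ^ (α - 1) * u := by
    rw [← Real.rpow_add_one (ne_of_gt hu0)]; ring_nf
  have hvα : v ^ α = v ^ (α - 1) * v := by
    rw [← Real.rpow_add_one (ne_of_gt hv0)]; ring_nf
  rcases le_or_gt v (u / 2) with h | h
  · -- v small: u ≤ 2(u-v)
    have h2 : u ≤ 2 * (u - v) := by linarith
    have hvpos : 0 ≤ v ^ α := (Real.rpow_pos_of_pos hv0 α).le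
    have : u ^ α ≤ 2 * (u - v) * u ^ (α - 1) := by
      rw [huα]
      have := Real.rpow_pos_of_pos hu0 (α - 1)
      nlinarith
    linarith
  · -- v ≥ u/2
    have h1 : u ^ (α - 1) ≤ v ^ (α - 1) :=
      Real.rpow_le_rpow_of_nonpos hv0 hvu (by linarith)
    have step1 : u ^ α - v ^ α ≤ v ^ (α - 1) * (u - v) := by
      rw [huα, hvα]
      have := Real.rpow_pos_of_pos hv0 (α - 1)
      nlinarith
    have h3 : v ^ (α - 1) ≤ 2 * u ^ (α - 1) := by
      have hh : v ^ (α - 1) ≤ (u / 2) ^ (α - 1) :=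
        Real.rpow_le_rpow_of_nonpos (by linarith) h.le (by linarith)
      have : (u / 2) ^ (α - 1) = u ^ (α - 1) * (2:ℝ) ^ (1 - α) := by
        rw [Real.div_rpow hu0.le (by norm_num), div_eq_mul_inv,
          ← Real.rpow_neg (by norm_num : (0:ℝ) ≤ 2), neg_sub]
      have h2le : (2:ℝ) ^ (1 - α) ≤ 2 := by
        nth_rewrite 2 [← Real.rpow_one (2:ℝ)]
        exact Real.rpow_le_rpow_of_exponent_le (by norm_num) (by linarith)
      calc v ^ (α - 1) ≤ (u/2) ^ (α-1) := hh
        _ = u ^ (α-1) * (2:ℝ) ^ (1-α) := this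
        _ ≤ 2 * u ^ (α-1) := by
            have := (Real.rpow_pos_of_pos hu0 (α - 1)).le
            nlinarith
    have := (Real.rpow_pos_of_pos hu0 (α-1)).le
    nlinarith [step1, h3, sub_nonneg.mpr hvu]

/-- Main single-pair estimate: `|jb a ^ α - jb b ^ α| ≤ 2 |a - b| * max(jb a, jb b)^(α-1)`. -/
lemma pair_bound {α : ℝ} (hα0 : 0 < α) (hα1 : α ≤ 1) (a b : ℝ) :
    |jb a ^ α - jb b ^ α| ≤ 2 * |a - b| * (max (jb a) (jb b)) ^ (α - 1) := by
  wlog h : jb b ≤ jb a generalizing a b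
  · have := this b a (le_of_not_ge h)
    rwa [abs_sub_comm b a, abs_sub_comm (jb b ^ α), max_comm] at this
  rw [max_eq_left h]
  have h1 : jb b ^ α ≤ jb a ^ α :=
    Real.rpow_le_rpow (Real.sqrt_nonneg _) h hα0.le
  rw [abs_of_nonneg (by linarith)]
  -- jb a - jb b ≤ |a - b|
  have hab : jb a - jb b ≤ |a - b| := by
    have hmono : |b| ≤ |a| := by
      by_contra hc
      push_neg at hc
      have : jb a < jb b := by
        rw [← jb_abs a, ← jb_abs b, jb, jb]
        apply Real.sqrt_lt_sqrt (by positivity)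
        have := abs_nonneg a
        nlinarith
      linarith
    have := jb_lipschitz (abs_nonneg b) hmono
    rw [jb_abs, jb_abs] at this
    have : jb a - jb b ≤ |a| - |b| := this
    have h2 : |a| - |b| ≤ |a - b| := abs_sub_abs_le_abs_sub a b
    linarith
  have key := pow_diff_le (jb_one_le b) h hα0 hα1
  have hpos := (Real.rpow_pos_of_pos (jb_pos a) (α - 1)).le
  nlinarith

/-- For `1/4 < s ≤ 1/2` and `n₄ = n₁ - n₂ + n₃`, there is `C = C(s)` such that
`|Ψ_s(n̄)| ≤ C ⟨n₁-n₂⟩ / min(max(⟨n₁⟩^{1-2s},⟨n₂⟩^{1-2s}), max(⟨n₃⟩^{1-2s},⟨n₄⟩^{1-2s}))`. -/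
theorem psi_refined_bound (s : ℝ) (hs1 : 1/4 < s) (hs2 : s ≤ 1/2) :
    ∃ C > 0, ∀ n₁ n₂ n₃ n₄ : ℤ, n₄ = n₁ - n₂ + n₃ →
      |Psi s n₁ n₂ n₃ n₄| ≤
        C * jb ((n₁ - n₂ : ℤ)) /
          min (max (jb n₁ ^ (1 - 2 * s)) (jb n₂ ^ (1 - 2 * s)))
              (max (jb n₃ ^ (1 - 2 * s)) (jb n₄ ^ (1 - 2 * s))) := by
  have hα0 : 0 < 2 * s := by linarith
  have hα1 : 2 * s ≤ 1 := by linarith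
  have hβ : (0:ℝ) ≤ 1 - 2 * s := by linarith
  refine ⟨4, by norm_num, ?_⟩
  intro n₁ n₂ n₃ n₄ h4
  -- rewrite the max of rpows
  have maxpow : ∀ a b : ℤ, (max (jb (a:ℝ)) (jb (b:ℝ))) ^ (2 * s - 1)
      = (max (jb (a:ℝ) ^ (1 - 2 * s)) (jb (b:ℝ) ^ (1 - 2 * s)))⁻¹ := by
    intro a b
    rcases le_total (jb (a:ℝ)) (jb (b:ℝ)) with h | h
    · rw [max_eq_right h, max_eq_right (Real.rpow_le_rpow (jb_pos _).le h hβ),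
        show (2 * s - 1 : ℝ) = -(1 - 2 * s) by ring, Real.rpow_neg (jb_pos _).le]
    · rw [max_eq_left h, max_eq_left (Real.rpow_le_rpow (jb_pos _).le h hβ),
        show (2 * s - 1 : ℝ) = -(1 - 2 * s) by ring, Real.rpow_neg (jb_pos _).le]
  have one_le_rp : ∀ a : ℤ, 1 ≤ jb (a:ℝ) ^ (1 - 2 * s) := by
    intro a
    have := Real.rpow_le_rpow zero_le_one (jb_one_le (a:ℝ)) hβ
    rwa [Real.one_rpow] at this
  set M₁ := max (jb (n₁:ℝ) ^ (1 - 2 * s)) (jb (n₂:ℝ) ^ (1 - 2 * s)) with hM₁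
  set M₂ := max (jb (n₃:ℝ) ^ (1 - 2 * s)) (jb (n₄:ℝ) ^ (1 - 2 * s)) with hM₂
  have hM₁pos : (0:ℝ) < M₁ := lt_of_lt_of_le one_pos (le_trans (one_le_rp n₁) (le_max_left _ _))
  have hM₂pos : (0:ℝ) < M₂ := lt_of_lt_of_le one_pos (le_trans (one_le_rp n₃) (le_max_left _ _))
  have hDpos : (0:ℝ) < min M₁ M₂ := lt_min hM₁pos hM₂pos
  have hI1 : M₁⁻¹ ≤ (min M₁ M₂)⁻¹ := inv_anti₀ hDpos (min_le_left _ _)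
  have hI2 : M₂⁻¹ ≤ (min M₁ M₂)⁻¹ := inv_anti₀ hDpos (min_le_right _ _)
  have b12 := pair_bound hα0 hα1 (n₁:ℝ) (n₂:ℝ)
  have b34 := pair_bound hα0 hα1 (n₃:ℝ) (n₄:ℝ)
  rw [show (2 * s - 1 : ℝ) = 2 * s - 1 from rfl, maxpow n₁ n₂] at b12
  rw [maxpow n₃ n₄] at b34
  have habs34 : |(n₃:ℝ) - (n₄:ℝ)| = |(n₁:ℝ) - (n₂:ℝ)| := by
    have : (n₃:ℝ) - (n₄:ℝ) = -((n₁:ℝ) - (n₂:ℝ)) := by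
      subst h4; push_cast; ring
    rw [this, abs_neg]
  rw [habs34] at b34
  have hPsi : |Psi s n₁ n₂ n₃ n₄| ≤
      |jb (n₁:ℝ) ^ (2 * s) - jb (n₂:ℝ) ^ (2 * s)| +
      |jb (n₃:ℝ) ^ (2 * s) - jb (n₄:ℝ) ^ (2 * s)| := by
    rw [show Psi s n₁ n₂ n₃ n₄ = (jb (n₁:ℝ) ^ (2 * s) - jb (n₂:ℝ) ^ (2 * s)) +
      (jb (n₃:ℝ) ^ (2 * s) - jb (n₄:ℝ) ^ (2 * s)) from by rw [Psi]; ring]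
    exact abs_add_le _ _
  have hjb : |(n₁:ℝ) - (n₂:ℝ)| ≤ jb ((n₁ - n₂ : ℤ) : ℝ) := by
    have e : ((n₁ - n₂ : ℤ) : ℝ) = (n₁:ℝ) - (n₂:ℝ) := by push_cast; ring
    rw [← e]
    exact abs_le_jb _
  have habs0 : (0:ℝ) ≤ |(n₁:ℝ) - (n₂:ℝ)| := abs_nonneg _
  have hDinv : (0:ℝ) ≤ (min M₁ M₂)⁻¹ := (inv_pos.mpr hDpos).le
  rw [div_eq_mul_inv]
  calc |Psi s n₁ n₂ n₃ n₄|
      ≤ 2 * |(n₁:ℝ) - (n₂:ℝ)| * M₁⁻¹ + 2 * |(n₁:ℝ) - (n₂:ℝ)| * M₂⁻¹ := by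
        linarith [hPsi, b12, b34]
    _ ≤ 4 * |(n₁:ℝ) - (n₂:ℝ)| * (min M₁ M₂)⁻¹ := by nlinarith
    _ ≤ 4 * jb ((n₁ - n₂ : ℤ) : ℝ) * (min M₁ M₂)⁻¹ := by nlinarith
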